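/- Let $t_0 \ge 2$, $C_1 \ge 0$, $0 < \mu < 1/10$, and suppose $\Phi\colon[t_0,\infty)\to[0,\infty)$ is differentiable with $\Phi'(t) \le \frac{-1}{t}\Phi(t)^2 + C_1 t^{2\mu-3/2}$ for $t\ge t_0$. Then $\Phi(t) \le \frac{C}{\sqrt{\log t}}$ for all $t\ge t_0$, for some constant $C$ depending on $t_0$, $\Phi(t_0)$, $C_1$ and $\mu$; in particular $\Phi(t)\to 0$ as $t\to\infty$. -/

import Mathlib

open Real

set_option maxHeartbeats 1600000

theorem log_decay_special_case
    (t0 C1 μ : ℝ) (ht0 : 2 ≤ t0) (hC1 : 0 ≤ C1) (hμ : 0 < μ) (hμ' : μ < 1/10)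
    (Φ Φ' : ℝ → ℝ) (hΦnn : ∀ t, t0 ≤ t → 0 ≤ Φ t)
    (hderiv : ∀ t, t0 ≤ t → HasDerivAt Φ (Φ' t) t)
    (hineq : ∀ t, t0 ≤ t → Φ' t ≤ -1 / t * (Φ t) ^ 2 + C1 * t ^ (2*μ - 3/2)) :
    (∃ C : ℝ, ∀ t, t0 ≤ t → Φ t ≤ C / Real.sqrt (Real.log t)) ∧
    Filter.Tendsto Φ Filter.atTop (nhds 0) := by
  obtain ⟨α, hαdef⟩ : ∃ α : ℝ, α = 1/2 - 2*μ := ⟨_, rfl⟩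
  have hα0 : (0:ℝ) < α := by rw [hαdef]; linarith
  obtain ⟨A, hAdef⟩ : ∃ A : ℝ, A = Φ t0 * Real.sqrt (Real.log t0) + C1/α + 2 := ⟨_, rfl⟩
  have hΦt0 : 0 ≤ Φ t0 * Real.sqrt (Real.log t0) :=
    mul_nonneg (hΦnn t0 le_rfl) (Real.sqrt_nonneg _)
  have hCα : 0 ≤ C1 / α := div_nonneg hC1 hα0.le
  have hA2 : 2 ≤ A := by rw [hAdef]; linarith
  have hA0 : 0 < A := by linarith
  have hACα : C1/α + 2 ≤ A := by rw [hAdef]; linarith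
  have hlog2 : (1:ℝ)/2 < Real.log 2 := by
    have := Real.log_two_gt_d9; linarith
  -- basic facts for x ≥ t0
  have basic : ∀ x : ℝ, t0 ≤ x →
      0 < x ∧ 1/2 < Real.log x ∧ (1:ℝ)/2 ≤ Real.sqrt (Real.log x) := by
    intro x hx
    have hx0 : (0:ℝ) < x := by linarith
    have hlx : 1/2 < Real.log x := by
      refine lt_of_lt_of_le hlog2 (Real.log_le_log (by norm_num) (by linarith))
    have hs : (1:ℝ)/2 ≤ Real.sqrt (Real.log x) := by
      calc (1/2 : ℝ) = Real.sqrt ((1/2)^2) := (Real.sqrt_sq (by norm_num)).symm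
        _ ≤ Real.sqrt (Real.log x) := Real.sqrt_le_sqrt (by nlinarith)
    exact ⟨hx0, hlx, hs⟩
  -- derivative of the barrier
  have hBderiv : ∀ x : ℝ, t0 ≤ x →
      HasDerivAt (fun y => A / Real.sqrt (Real.log y))
        (-A / (2 * x * Real.log x * Real.sqrt (Real.log x))) x := by
    intro x hx
    obtain ⟨hx0, hlx, hs⟩ := basic x hx
    have hlne : Real.log x ≠ 0 := by linarith
    have hsp : 0 < Real.sqrt (Real.log x) := by linarith
    have h1 : HasDerivAt Real.log x⁻¹ x := Real.hasDerivAt_log hx0.ne'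
    have h2 : HasDerivAt (fun y => Real.sqrt (Real.log y))
        (1 / (2 * Real.sqrt (Real.log x)) * x⁻¹) x :=
      (Real.hasDerivAt_sqrt hlne).comp x h1
    have h3 : HasDerivAt (fun y => A / Real.sqrt (Real.log y))
        ((0 * Real.sqrt (Real.log x) - A * (1 / (2 * Real.sqrt (Real.log x)) * x⁻¹)) / Real.sqrt (Real.log x) ^ 2) x :=
      (hasDerivAt_const x A).div h2 hsp.ne'
    convert h3 using 1
    rw [Real.sq_sqrt (by linarith : (0:ℝ) ≤ Real.log x)]
    field_simp
    ring
  -- the comparison principle on [t0, b]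
  have key : ∀ t, t0 ≤ t → Φ t ≤ A / Real.sqrt (Real.log t) := by
    intro b hb
    have main : ∀ x ∈ Set.Icc t0 b, Φ x ≤ A / Real.sqrt (Real.log x) := by
      intro x hxmem
      refine image_le_of_deriv_right_lt_deriv_boundary' (f' := Φ')
        (B := fun y => A / Real.sqrt (Real.log y))
        (B' := fun y => -A / (2 * y * Real.log y * Real.sqrt (Real.log y)))
        ?_ ?_ ?_ ?_ ?_ ?_ hxmem
      · exact fun y hy => ((hderiv y hy.1).continuousAt).continuousWithinAt
      · exact fun y hy => (hderiv y hy.1).hasDerivWithinAt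
      · -- Φ t0 ≤ B t0
        obtain ⟨hx0, hlx, hs⟩ := basic t0 le_rfl
        have hsp : 0 < Real.sqrt (Real.log t0) := by linarith
        rw [le_div_iff₀ hsp]
        linarith
      · exact fun y hy => ((hBderiv y hy.1).continuousAt).continuousWithinAt
      · exact fun y hy => (hBderiv y hy.1).hasDerivWithinAt
      · -- the bound at touching points
        intro y hy hfB
        obtain ⟨hy0, hly, hsy⟩ := basic y hy.1
        obtain ⟨L, hLdef⟩ : ∃ L : ℝ, L = Real.log y := ⟨_, rfl⟩
        obtain ⟨s, hsdef⟩ : ∃ s : ℝ, s = Real.sqrt L := ⟨_, rfl⟩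
        rw [← hLdef] at hly
        rw [← hLdef, ← hsdef] at hsy
        rw [← hLdef, ← hsdef] at hfB
        have hsp : (0:ℝ) < s := by linarith
        have hs2 : s ^ 2 = L := by rw [hsdef]; exact Real.sq_sqrt (by linarith)
        have hxL : (0:ℝ) < y * L := by positivity
        -- bound on the power term
        have hxα : (0:ℝ) < y ^ α := Real.rpow_pos_of_pos hy0 α
        have hlog_le : L ≤ y ^ α / α := by
          have h4 : Real.log (y ^ α) ≤ y ^ α - 1 :=
            Real.log_le_sub_one_of_pos hxα
          rw [Real.log_rpow hy0, ← hLdef] at h4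
          rw [le_div_iff₀ hα0]
          nlinarith
        have hpow : y ^ (2*μ - 3/2) = 1 / (y ^ α * y) := by
          rw [show 2*μ - 3/2 = -(α + 1) by rw [hαdef]; ring]
          rw [Real.rpow_neg hy0.le, Real.rpow_add hy0, Real.rpow_one, one_div]
        have hQ : C1 * y ^ (2*μ - 3/2) ≤ (C1/α) / (y * L) := by
          rw [hpow, mul_one_div, div_le_div_iff₀ (by positivity) hxL]
          have h5 : 0 ≤ (C1 * (y^α/α) - C1 * L) * y :=
            mul_nonneg (by nlinarith [mul_le_mul_of_nonneg_left hlog_le hC1]) hy0.le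
          have e2 : C1 / α * (y ^ α * y) = (C1 * (y^α/α) - C1 * L) * y + C1 * (y * L) := by
            ring
          rw [e2]
          linarith [h5]
        -- the main strict inequality
        have hAA : 2*A ≤ A^2 := by
          nlinarith [mul_nonneg (by linarith : (0:ℝ) ≤ A) (by linarith : (0:ℝ) ≤ A - 2)]
        have h6 : A + 2 ≤ A^2 - C1/α := by linarith
        have h7 : (A^2 - C1/α) * 1 ≤ (A^2 - C1/α) * (2*s) :=
          mul_le_mul_of_nonneg_left (by linarith) (by linarith)
        have main2 : (C1/α - A^2) * (2*s) + A < 0 := by linarith [h7]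
        have keyineq : -A^2/(y*L) + (C1/α)/(y*L) < -A/(2*y*L*s) := by
          rw [← add_div, div_lt_div_iff₀ hxL (by positivity)]
          have h2 : (y*L) * ((C1/α - A^2) * (2*s) + A) < 0 :=
            mul_neg_of_pos_of_neg hxL main2
          linarith [h2]

        have e1 : -1/y * (Φ y)^2 = -A^2/(y*L) := by
          rw [hfB, div_pow, hs2]
          field_simp
        show Φ' y < -A / (2 * y * Real.log y * Real.sqrt (Real.log y))
        rw [← hLdef, ← hsdef]
        calc Φ' y ≤ -1 / y * (Φ y) ^ 2 + C1 * y ^ (2*μ - 3/2) := hineq y hy.1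
          _ ≤ -A^2/(y*L) + (C1/α)/(y*L) := by rw [e1]; linarith [hQ]
          _ < -A/(2*y*L*s) := keyineq
          _ = -A / (2 * y * L * s) := by ring
    exact main b ⟨hb, le_rfl⟩
  constructor
  · exact ⟨A, key⟩
  · -- tendsto
    have hsq : Filter.Tendsto Real.sqrt Filter.atTop Filter.atTop := by
      apply Filter.tendsto_atTop_atTop.2
      intro b
      refine ⟨b^2, fun a ha => ?_⟩
      calc b ≤ |b| := le_abs_self b
        _ = Real.sqrt (b^2) := (Real.sqrt_sq_eq_abs b).symm
        _ ≤ Real.sqrt a := Real.sqrt_le_sqrt ha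
    have h1 : Filter.Tendsto (fun t => A / Real.sqrt (Real.log t)) Filter.atTop (nhds 0) :=
      Filter.Tendsto.div_atTop tendsto_const_nhds (hsq.comp Real.tendsto_log_atTop)
    refine tendsto_of_tendsto_of_tendsto_of_le_of_le' tendsto_const_nhds h1 ?_ ?_
    · exact (Filter.eventually_ge_atTop t0).mono fun t ht => hΦnn t ht
    · exact (Filter.eventually_ge_atTop t0).mono fun t ht => key t ht
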